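/- For n ≥ 1, the inner arc complex of a non-orientable crown with n boundary vertices is strongly collapsible. -/
import Mathlib


open Finset

attribute [local instance] Classical.propDecidable

noncomputable section

universe u v

/-- A finite abstract simplicial complex: a finite collection of nonempty finite sets
closed under taking nonempty subsets. -/
def IsComplex {V : Type u} (X : Finset (Finset V)) : Prop :=
  (∀ s ∈ X, s.Nonempty) ∧ ∀ s ∈ X, ∀ t : Finset V, t ⊆ s → t.Nonempty → t ∈ X

/-- `s` is a maximal simplex (facet) of `X`. -/
def IsFacet {V : Type u} (X : Finset (Finset V)) (s : Finset V) : Prop :=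
  s ∈ X ∧ ∀ t ∈ X, s ⊆ t → t = s

/-- An elementary collapse: `σ` is a free face of `X` whose unique maximal coface is `τ`,
and `Y` results from removing all simplices containing `σ`. -/
def ElemCollapse {V : Type u} (X Y : Finset (Finset V)) : Prop :=
  ∃ σ τ : Finset V, σ ∈ X ∧ IsFacet X τ ∧ σ ⊂ τ ∧
    (∀ t ∈ X, σ ⊆ t → t ⊆ τ) ∧ Y = X.filter (fun s => ¬ σ ⊆ s)

/-- `X` simplicially collapses onto `Y`. -/
def Collapses {V : Type u} (X Y : Finset (Finset V)) : Prop :=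
  Relation.ReflTransGen ElemCollapse X Y

/-- `X` is collapsible: it collapses to a single vertex. -/
def Collapsible {V : Type u} (X : Finset (Finset V)) : Prop :=
  ∃ v : V, Collapses X {{v}}

/-- The vertex `v` is dominated by the vertex `w ≠ v`: every facet containing `v`
contains `w`. -/
def Dominated {V : Type u} (X : Finset (Finset V)) (v w : V) : Prop :=
  w ≠ v ∧ ∀ s : Finset V, IsFacet X s → v ∈ s → w ∈ s

/-- An elementary strong collapse: deletion of a dominated vertex. -/
def ElemStrongCollapse {V : Type u} (X Y : Finset (Finset V)) : Prop :=
  ∃ v w : V, {v} ∈ X ∧ Dominated X v w ∧ Y = X.filter (fun s => v ∉ s)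

/-- `X` strongly collapses onto `Y`. -/
def StrongCollapses {V : Type u} (X Y : Finset (Finset V)) : Prop :=
  Relation.ReflTransGen ElemStrongCollapse X Y

/-- `X` is strongly collapsible: it strongly collapses to a single vertex. -/
def StrongCollapsible {V : Type u} (X : Finset (Finset V)) : Prop :=
  ∃ v : V, StrongCollapses X {{v}}

/-- The set of vertices of a complex. -/
def vertexSet {V : Type u} (X : Finset (Finset V)) : Finset V := X.sup id

/-- The link of a simplex `σ` in `X`. -/
def linkC {V : Type u} (X : Finset (Finset V)) (σ : Finset V) : Finset (Finset V) :=
  X.filter (fun η => Disjoint η σ ∧ η ∪ σ ∈ X)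

/-- The face-deletion of `σ` in `X`. -/
def faceDeletion {V : Type u} (X : Finset (Finset V)) (σ : Finset V) : Finset (Finset V) :=
  X.filter (fun η => ¬ σ ⊆ η)

/-- The simplicial join of two complexes (on disjoint vertex sets, via `Sum`). -/
def joinC {A : Type u} {B : Type v} (X : Finset (Finset A)) (Y : Finset (Finset B)) :
    Finset (Finset (A ⊕ B)) :=
  (((insert (∅ : Finset A) X) ×ˢ (insert (∅ : Finset B) Y)).image
      (fun p => p.1.image Sum.inl ∪ p.2.image Sum.inr)).filter (·.Nonempty)

/-- The flag (clique) complex on the admissible vertices (those satisfying `P`) of a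
finite type, with respect to a (reflexive, symmetric) compatibility relation `R`:
simplices are the nonempty finite sets of admissible vertices that are pairwise
compatible. -/
def cliqueComplex {A : Type u} [Fintype A] (P : A → Prop) (R : A → A → Prop) :
    Finset (Finset A) :=
  Finset.univ.filter (fun s : Finset A =>
    s.Nonempty ∧ (∀ a ∈ s, P a) ∧ ∀ a ∈ s, ∀ b ∈ s, R a b)

/-- A complex is a cone if some vertex lies in every maximal simplex. -/
def IsCone {A : Type u} (X : Finset (Finset A)) : Prop :=
  ∃ v : A, {v} ∈ X ∧ ∀ s, IsFacet X s → v ∈ s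

/-- Simplicial isomorphism (onto): `Y` is the image of `X` under an injection of
vertices. -/
def Isom {A : Type u} {B : Type v} (X : Finset (Finset A)) (Y : Finset (Finset B)) : Prop :=
  ∃ f : A → B, Function.Injective f ∧ Y = X.image (fun s => s.image f)

/-! ### A combinatorial model of the arc complex of a non-orientable crown `M(n)`
(a Möbius strip with `n` marked boundary vertices, labelled by `Fin n` in cyclic
order). -/

/-- `k` lies in the closed cyclic interval from `i` to `j` (counterclockwise); by
convention the interval is the full circle when `i = j`. -/
def btwn {n : ℕ} (i j k : Fin n) : Prop :=
  if i = j then True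
  else if i.val ≤ j.val then i.val ≤ k.val ∧ k.val ≤ j.val
  else i.val ≤ k.val ∨ k.val ≤ j.val

/-- `k` lies strictly inside the cyclic interval from `i` to `j`. -/
def sbtwn {n : ℕ} (i j k : Fin n) : Prop := btwn i j k ∧ k ≠ i ∧ k ≠ j

/-- Disjointness (compatibility) of two boundary arcs (b-arcs), each encoded by the
ordered pair `(i, j)` of its endpoints, the polygonal side being the cyclic interval
`[i..j]` (the pair `(i, i)` encodes the maximal b-arc `M i`, whose polygonal side is
the whole circle): the polygonal sides must be nested (with no endpoint of the outer
arc strictly inside the inner interval) or have disjoint interiors. -/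
def bbDisj {n : ℕ} (p q : Fin n × Fin n) : Prop :=
  p = q ∨
  ((∀ k, btwn p.1 p.2 k → btwn q.1 q.2 k) ∧ ¬ sbtwn p.1 p.2 q.1 ∧ ¬ sbtwn p.1 p.2 q.2) ∨
  ((∀ k, btwn q.1 q.2 k → btwn p.1 p.2 k) ∧ ¬ sbtwn q.1 q.2 p.1 ∧ ¬ sbtwn q.1 q.2 p.2) ∨
  ((∀ k, ¬ (sbtwn p.1 p.2 k ∧ btwn q.1 q.2 k)) ∧ ∀ k, ¬ (btwn p.1 p.2 k ∧ sbtwn q.1 q.2 k))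

/-- Disjointness of two c-arcs of the Möbius crown.  A c-arc is encoded by the pair
`(i, j)` of its endpoints with `i ≤ j` (so `(i, i)` is the maximal c-arc `L i`).
Cutting along the c-arc `(p₁, p₂)` produces a strip whose two sides carry the closed
intervals `[p₁..p₂]` and its closed complement; a c-arc `(q₁, q₂)` is disjoint from it
iff one of its endpoints lies in the first closed interval and the other in the
second. -/
def cDisjMob {n : ℕ} (p q : Fin n × Fin n) : Prop :=
  p = q ∨
  (p.1 ≤ q.1 ∧ q.1 ≤ p.2 ∧ (q.2 ≤ p.1 ∨ p.2 ≤ q.2)) ∨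
  (p.1 ≤ q.2 ∧ q.2 ≤ p.2 ∧ (q.1 ≤ p.1 ∨ p.2 ≤ q.1))

/-- Arcs of the non-orientable crown `M(n)`: `Sum.inl (i, j)` (with `i ≤ j`) is the
c-arc joining `i` and `j` (the maximal c-arc `L i` when `i = j`); `Sum.inr (i, j)` is
the b-arc with endpoints `i, j` whose polygonal side is the cyclic interval `[i..j]`
(the maximal b-arc `M i` when `i = j`). -/
abbrev MobArc (n : ℕ) := (Fin n × Fin n) ⊕ (Fin n × Fin n)

/-- Disjointness (compatibility, up to homotopy) of arcs of the non-orientable crown: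
a c-arc is disjoint from a b-arc iff neither of its endpoints lies strictly inside the
polygonal side of the b-arc. -/
def mobDisj {n : ℕ} : MobArc n → MobArc n → Prop
  | Sum.inl p, Sum.inl q => cDisjMob p q
  | Sum.inl p, Sum.inr q => ¬ sbtwn q.1 q.2 p.1 ∧ ¬ sbtwn q.1 q.2 p.2
  | Sum.inr q, Sum.inl p => ¬ sbtwn q.1 q.2 p.1 ∧ ¬ sbtwn q.1 q.2 p.2
  | Sum.inr p, Sum.inr q => bbDisj p q

/-- Validity: c-arcs are encoded with `i ≤ j`; the maximal b-arcs `M i` are nontrivial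
only when `n ≥ 2`. -/
def mobValid {n : ℕ} : MobArc n → Prop
  | Sum.inl p => p.1 ≤ p.2
  | Sum.inr p => p.1 ≠ p.2 ∨ 2 ≤ n

/-- The full arc complex of the non-orientable crown `M(n)`. -/
def mobComplex (n : ℕ) : Finset (Finset (MobArc n)) :=
  cliqueComplex mobValid mobDisj

/-- The inner arc complex of `M(n)`, the subcomplex spanned by the c-arcs. -/
def innerMobComplex (n : ℕ) : Finset (Finset (MobArc n)) :=
  (mobComplex n).filter (fun s => ∀ a ∈ s, a.isLeft = true)

/-- The inner arc complex of `M(n)`, directly as a flag complex on c-arcs. -/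
def innerMob (n : ℕ) : Finset (Finset (Fin n × Fin n)) :=
  cliqueComplex (fun p => p.1 ≤ p.2) cDisjMob

/-! ### Auxiliary machinery for the proof -/

/-- Clique complex on a vertex subset `S`. -/
def cliqueOn {A : Type u} [Fintype A] (S : Finset A) (R : A → A → Prop) :
    Finset (Finset A) :=
  Finset.univ.filter (fun s : Finset A =>
    s.Nonempty ∧ s ⊆ S ∧ ∀ a ∈ s, ∀ b ∈ s, R a b)

lemma mem_cliqueOn {A : Type u} [Fintype A] {S : Finset A} {R : A → A → Prop}
    {s : Finset A} :
    s ∈ cliqueOn S R ↔ s.Nonempty ∧ s ⊆ S ∧ ∀ a ∈ s, ∀ b ∈ s, R a b := by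
  simp [cliqueOn]

/-- Flag strong collapse step: a vertex whose closed neighborhood is contained in
that of another vertex is dominated, and deleting it gives the clique complex on the
smaller vertex set. -/
lemma cliqueOn_step {A : Type u} [Fintype A] (S : Finset A) (R : A → A → Prop)
    (v w : A) (hvS : v ∈ S) (hwS : w ∈ S) (hvw : w ≠ v)
    (hRvv : R v v) (hRww : R w w)
    (h1 : ∀ u ∈ S, R v u → R w u) (h2 : ∀ u ∈ S, R u v → R u w) :
    ElemStrongCollapse (cliqueOn S R) (cliqueOn (S.filter (fun u => u ≠ v)) R) := by
  refine ⟨v, w, ?_, ⟨hvw, ?_⟩, ?_⟩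
  · exact mem_cliqueOn.2 ⟨⟨v, Finset.mem_singleton_self v⟩,
      Finset.singleton_subset_iff.2 hvS, by simp [hRvv]⟩
  · intro s hs hv
    by_contra hws
    obtain ⟨hsX, hmax⟩ := hs
    obtain ⟨hne, hsub, hpair⟩ := mem_cliqueOn.1 hsX
    have hins : insert w s ∈ cliqueOn S R := by
      refine mem_cliqueOn.2 ⟨⟨w, Finset.mem_insert_self _ _⟩,
        Finset.insert_subset hwS hsub, ?_⟩
      intro a ha b hb
      rcases Finset.mem_insert.1 hb with hb' | hb'
      · subst hb'
        rcases Finset.mem_insert.1 ha with ha' | ha'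
        · subst ha'; exact hRww
        · exact h2 a (hsub ha') (hpair a ha' v hv)
      · rcases Finset.mem_insert.1 ha with ha' | ha'
        · subst ha'; exact h1 b (hsub hb') (hpair v hv b hb')
        · exact hpair a ha' b hb'
    have := hmax _ hins (Finset.subset_insert _ _)
    exact hws (this ▸ Finset.mem_insert_self w s)
  · ext s
    constructor
    · intro hs
      obtain ⟨hne, hsub, hp⟩ := mem_cliqueOn.1 hs
      refine Finset.mem_filter.2 ⟨mem_cliqueOn.2
        ⟨hne, fun a ha => (Finset.mem_filter.1 (hsub ha)).1, hp⟩, ?_⟩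
      intro hvs
      exact (Finset.mem_filter.1 (hsub hvs)).2 rfl
    · intro hs
      have hs' := Finset.mem_filter.1 hs
      obtain ⟨hne, hsub, hp⟩ := mem_cliqueOn.1 hs'.1
      exact mem_cliqueOn.2 ⟨hne,
        fun a ha => Finset.mem_filter.2 ⟨hsub ha, fun h => hs'.2 (h ▸ ha)⟩, hp⟩

lemma cliqueOn_singleton {A : Type u} [Fintype A] (R : A → A → Prop) (x : A)
    (hx : R x x) : cliqueOn ({x} : Finset A) R = {{x}} := by
  ext s
  simp only [mem_cliqueOn, Finset.mem_singleton, Finset.subset_singleton_iff]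
  constructor
  · rintro ⟨hne, (rfl | rfl), -⟩
    · exact absurd rfl hne.ne_empty
    · rfl
  · rintro rfl
    exact ⟨⟨x, Finset.mem_singleton_self x⟩, Or.inr rfl, by simp [hx]⟩

lemma cDisjMob_iff {n : ℕ} (p q : Fin n × Fin n) :
    cDisjMob p q ↔
      (p.1.val = q.1.val ∧ p.2.val = q.2.val) ∨
      (p.1.val ≤ q.1.val ∧ q.1.val ≤ p.2.val ∧
        (q.2.val ≤ p.1.val ∨ p.2.val ≤ q.2.val)) ∨
      (p.1.val ≤ q.2.val ∧ q.2.val ≤ p.2.val ∧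
        (q.1.val ≤ p.1.val ∨ p.2.val ≤ q.1.val)) := by
  unfold cDisjMob
  rw [Prod.ext_iff, Fin.ext_iff, Fin.ext_iff]
  simp only [Fin.le_def]

lemma cDisjMob_refl {n : ℕ} (p : Fin n × Fin n) : cDisjMob p p := Or.inl rfl

/-- The lex-suffix vertex set: valid c-arcs lex-at-least `v`. -/
def mobSuf {n : ℕ} (v : Fin n × Fin n) : Finset (Fin n × Fin n) :=
  Finset.univ.filter (fun u => u.1.val ≤ u.2.val ∧
    (v.1.val < u.1.val ∨ (v.1.val = u.1.val ∧ v.2.val ≤ u.2.val)))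

lemma mem_mobSuf {n : ℕ} {v u : Fin n × Fin n} :
    u ∈ mobSuf v ↔ u.1.val ≤ u.2.val ∧
      (v.1.val < u.1.val ∨ (v.1.val = u.1.val ∧ v.2.val ≤ u.2.val)) := by
  simp [mobSuf]

set_option maxHeartbeats 2000000 in
lemma mobSuf_main {n : ℕ} (hn : 1 ≤ n) :
    ∀ m : ℕ, ∀ v : Fin n × Fin n, v.1.val ≤ v.2.val → (mobSuf v).card ≤ m →
      StrongCollapses (cliqueOn (mobSuf v) cDisjMob)
        {{((⟨n - 1, by omega⟩ : Fin n), (⟨n - 1, by omega⟩ : Fin n))}} := by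
  intro m
  induction m with
  | zero =>
    intro v hv hc
    exfalso
    have hvmem : v ∈ mobSuf v := mem_mobSuf.2 ⟨hv, Or.inr ⟨rfl, le_refl _⟩⟩
    have := Finset.card_pos.2 ⟨v, hvmem⟩
    omega
  | succ m ih =>
    intro v hv hc
    set t : Fin n := ⟨n - 1, by omega⟩ with ht
    have hv1 := v.1.isLt
    have hv2 := v.2.isLt
    by_cases hbase : v.1.val = n - 1
    · -- base case: v = (t, t)
      have hv2t : v.2.val = n - 1 := by omega
      have hset : mobSuf v = {(t, t)} := by
        ext u
        have hu1 := u.1.isLt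
        have hu2 := u.2.isLt
        simp only [mem_mobSuf, Finset.mem_singleton, Prod.ext_iff, Fin.ext_iff, ht]
        omega
      rw [hset, cliqueOn_singleton _ _ (cDisjMob_refl _)]
      exact Relation.ReflTransGen.refl
    · -- inductive step: v ≠ (t,t); pick dominating vertex w
      have hvmem : v ∈ mobSuf v := mem_mobSuf.2 ⟨hv, Or.inr ⟨rfl, le_refl _⟩⟩
      -- the next vertex in lex order
      obtain ⟨v', hv'valid, hv'erase, hv'gt⟩ :
          ∃ v' : Fin n × Fin n, v'.1.val ≤ v'.2.val ∧
            (mobSuf v).filter (fun u => u ≠ v) = mobSuf v' ∧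
            (v.1.val < v'.1.val ∨ (v.1.val = v'.1.val ∧ v.2.val < v'.2.val)) := by
        by_cases hj : v.2.val = n - 1
        · refine ⟨(⟨v.1.val + 1, by omega⟩, ⟨v.1.val + 1, by omega⟩), le_refl _, ?_, ?_⟩
          · ext u
            have hu1 := u.1.isLt
            have hu2 := u.2.isLt
            simp only [Finset.mem_filter, mem_mobSuf, Prod.ext_iff, Fin.ext_iff, ne_eq]
            omega
          · left; simp
        · refine ⟨(v.1, ⟨v.2.val + 1, by omega⟩), by simp; omega, ?_, ?_⟩
          · ext u
            have hu1 := u.1.isLt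
            have hu2 := u.2.isLt
            simp only [Finset.mem_filter, mem_mobSuf, Prod.ext_iff, Fin.ext_iff, ne_eq]
            omega
          · right; simp
      have hcard : (mobSuf v').card ≤ m := by
        rw [← hv'erase]
        have hss : (mobSuf v).filter (fun u => u ≠ v) ⊂ mobSuf v :=
          Finset.filter_ssubset.2 ⟨v, hvmem, by simp⟩
        have := Finset.card_lt_card hss
        omega
      refine Relation.ReflTransGen.head ?_ (ih v' hv'valid hcard)
      rw [← hv'erase]
      -- choose the dominating vertex w
      obtain ⟨w, hwmem, hwne, h1, h2⟩ :
          ∃ w : Fin n × Fin n, w ∈ mobSuf v ∧ w ≠ v ∧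
            (∀ u ∈ mobSuf v, cDisjMob v u → cDisjMob w u) ∧
            (∀ u ∈ mobSuf v, cDisjMob u v → cDisjMob u w) := by
        have key : ∀ w : Fin n × Fin n,
            (w.1.val ≤ w.2.val ∧
             (v.1.val < w.1.val ∨ (v.1.val = w.1.val ∧ v.2.val < w.2.val))) →
            (∀ u : Fin n × Fin n, u.1.val ≤ u.2.val →
              (v.1.val < u.1.val ∨ (v.1.val = u.1.val ∧ v.2.val ≤ u.2.val)) →
              ((cDisjMob v u → cDisjMob w u) ∧ (cDisjMob u v → cDisjMob u w))) →
            ∃ w : Fin n × Fin n, w ∈ mobSuf v ∧ w ≠ v ∧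
              (∀ u ∈ mobSuf v, cDisjMob v u → cDisjMob w u) ∧
              (∀ u ∈ mobSuf v, cDisjMob u v → cDisjMob u w) := by
          intro w hw hdom
          refine ⟨w, mem_mobSuf.2 ⟨hw.1, by omega⟩, ?_, ?_, ?_⟩
          · intro h; rw [h] at hw; omega
          · intro u hu; exact (hdom u (mem_mobSuf.1 hu).1 (mem_mobSuf.1 hu).2).1
          · intro u hu; exact (hdom u (mem_mobSuf.1 hu).1 (mem_mobSuf.1 hu).2).2
        by_cases hA : v.1.val = v.2.val
        · -- L_i dominated by (i, i+1)
          refine key (v.1, ⟨v.1.val + 1, by omega⟩) (by simp; omega) ?_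
          intro u hu hlex
          have hu1 := u.1.isLt; have hu2 := u.2.isLt
          rw [cDisjMob_iff, cDisjMob_iff, cDisjMob_iff, cDisjMob_iff]
          simp only
          omega
        · by_cases hB : v.2.val < n - 1
          · -- (i,j), j < n-1 dominated by (j, n-1)
            refine key (v.2, t) (by simp [ht]; omega) ?_
            intro u hu hlex
            have hu1 := u.1.isLt; have hu2 := u.2.isLt
            rw [cDisjMob_iff, cDisjMob_iff, cDisjMob_iff, cDisjMob_iff]
            simp only [ht]
            omega
          · by_cases hC : v.1.val < n - 2
            · -- (i, n-1), i < n-2 dominated by (i+1, n-1)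
              refine key (⟨v.1.val + 1, by omega⟩, t) (by simp [ht]; omega) ?_
              intro u hu hlex
              have hu1 := u.1.isLt; have hu2 := u.2.isLt
              rw [cDisjMob_iff, cDisjMob_iff, cDisjMob_iff, cDisjMob_iff]
              simp only [ht]
              omega
            · -- (n-2, n-1) dominated by (n-1, n-1)
              refine key (t, t) (by simp [ht]; omega) ?_
              intro u hu hlex
              have hu1 := u.1.isLt; have hu2 := u.2.isLt
              rw [cDisjMob_iff, cDisjMob_iff, cDisjMob_iff, cDisjMob_iff]
              simp only [ht]
              omega
      have hstep := cliqueOn_step (mobSuf v) cDisjMob v w hvmem hwmem hwne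
        (cDisjMob_refl v) (cDisjMob_refl w)
        (fun u hu => h1 u hu) (fun u hu => h2 u hu)
      convert hstep using 2
      ext u
      simp only [Finset.mem_filter]

lemma innerMob_eq {n : ℕ} (v0 : Fin n × Fin n) (h1 : v0.1.val = 0)
    (h2 : v0.2.val = 0) :
    innerMob n = cliqueOn (mobSuf v0) cDisjMob := by
  ext s
  simp only [innerMob, cliqueComplex, mem_cliqueOn, Finset.mem_filter,
    Finset.mem_univ, true_and]
  constructor
  · rintro ⟨hne, hval, hpair⟩
    refine ⟨hne, ?_, hpair⟩
    intro u hu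
    exact mem_mobSuf.2 ⟨Fin.le_def.1 (hval u hu), by rw [h1, h2]; omega⟩
  · rintro ⟨hne, hsub, hpair⟩
    refine ⟨hne, ?_, hpair⟩
    intro u hu
    exact Fin.le_def.2 (mem_mobSuf.1 (hsub hu)).1

/-- For `n ≥ 1`, the inner arc complex of the non-orientable crown
`M(n)` is strongly collapsible. -/
theorem stmt15 (n : ℕ) (hn : 1 ≤ n) :
    StrongCollapsible (innerMob n) := by
  refine ⟨((⟨n - 1, by omega⟩ : Fin n), (⟨n - 1, by omega⟩ : Fin n)), ?_⟩
  rw [innerMob_eq ((⟨0, by omega⟩ : Fin n), (⟨0, by omega⟩ : Fin n)) rfl rfl]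
  exact mobSuf_main hn _ _ (le_refl _) (le_refl _)
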